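/- arXiv:alg-geom/9312007 — 2 statements merged into one kernel-verified Lean document; each statement's English description precedes it below -/
import Mathlib

section
/- Let g₀, g₁ : ℂ → ℂ be entire functions of finite order with g₁ nowhere vanishing, satisfying g₀² + g₁² = 1. Then g₀ and g₁ are constant. -/
open Metric Set


private lemma deriv_diff {u : ℂ → ℂ} (hu : Differentiable ℂ u) :
    Differentiable ℂ (deriv u) := by
  have : AnalyticOnNhd ℂ u Set.univ := fun z _ => hu.analyticAt z
  exact fun z => ((this.deriv z trivial).differentiableAt)

/-- Every entire function has an entire primitive. -/
private lemma exists_primitive (u : ℂ → ℂ) (hu : Differentiable ℂ u) :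
    ∃ h : ℂ → ℂ, h 0 = 0 ∧ ∀ z, HasDerivAt h (u z) z := by
  have hu' : Differentiable ℂ (deriv u) := deriv_diff hu
  refine ⟨fun x => ∫ t in (0:ℝ)..1, x * u ((t : ℂ) * x), by simp, ?_⟩
  intro z
  set F' : ℂ → ℝ → ℂ := fun x t => u ((t:ℂ) * x) + x * (deriv u ((t:ℂ) * x) * (t:ℂ)) with hF'
  obtain ⟨M, hM⟩ : ∃ M, ∀ w ∈ closedBall (0:ℂ) (‖z‖+1), ‖u w‖ + (‖z‖+1) * ‖deriv u w‖ ≤ M := by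
    obtain ⟨M, hM⟩ := (isCompact_closedBall (0:ℂ) (‖z‖+1)).exists_bound_of_continuousOn
      ((hu.continuous.norm.add
        (continuous_const.mul hu'.continuous.norm)).continuousOn (s := closedBall 0 (‖z‖+1)))
    refine ⟨M, fun w hw => ?_⟩
    have := hM w hw
    rw [Real.norm_eq_abs] at this
    exact (le_abs_self _).trans this
  have cont : ∀ x : ℂ, Continuous fun t : ℝ => x * u ((t:ℂ) * x) := fun x =>
    continuous_const.mul (hu.continuous.comp ((Complex.continuous_ofReal.mul continuous_const)))
  have cont' : ∀ x : ℂ, Continuous (F' x) := fun x => by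
    refine (hu.continuous.comp (Complex.continuous_ofReal.mul continuous_const)).add
      (continuous_const.mul (((hu'.continuous.comp
        (Complex.continuous_ofReal.mul continuous_const)).mul Complex.continuous_ofReal)))
  have key := (intervalIntegral.hasDerivAt_integral_of_dominated_loc_of_deriv_le
      (F := fun x t => x * u ((t:ℂ) * x)) (F' := F') (x₀ := z) (a := 0) (b := 1)
      (bound := fun _ => M) (μ := MeasureTheory.volume) (Metric.ball_mem_nhds z one_pos)
      (Filter.Eventually.of_forall fun x => ((cont x).aestronglyMeasurable))
      ((cont z).intervalIntegrable _ _)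
      ((cont' z).aestronglyMeasurable)
      ?_ (intervalIntegrable_const) ?_).2
  · -- compute the integral of F' z
    have hG : ∀ w : ℂ, HasDerivAt (fun w : ℂ => w * u (w * z))
        (u (w * z) + w * (deriv u (w * z) * z)) w := by
      intro w
      have h1 : HasDerivAt (fun w : ℂ => w * z) z w := by
        simpa using (hasDerivAt_id w).mul_const z
      have h2 : HasDerivAt u (deriv u (w * z)) (w * z) := (hu _).hasDerivAt
      have := (hasDerivAt_id w).mul (h2.comp w h1)
      refine this.congr_deriv ?_
      simp only [Function.comp_apply, id_eq]
      ring
    have hderiv : ∀ t ∈ uIcc (0:ℝ) 1,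
        HasDerivAt (fun s : ℝ => (s:ℂ) * u ((s:ℂ) * z)) (F' z t) t := by
      intro t _
      have := (hG (t:ℂ)).comp_ofReal
      convert this using 1
      simp only [hF']
      ring
    have hint : IntervalIntegrable (F' z) MeasureTheory.volume 0 1 :=
      (cont' z).intervalIntegrable _ _
    have := intervalIntegral.integral_eq_sub_of_hasDerivAt hderiv hint
    rw [this] at key
    simpa using key
  · -- bound
    refine Filter.Eventually.of_forall fun t ht => fun x hx => ?_
    have ht' : |t| ≤ 1 := by
      rw [Set.uIoc_of_le (by norm_num : (0:ℝ) ≤ 1)] at ht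
      rw [abs_le]; constructor <;> [linarith [ht.1.le]; exact ht.2]
    have hxn : ‖x‖ ≤ ‖z‖ + 1 := by
      have := mem_ball_iff_norm.mp hx
      have := norm_le_norm_add_norm_sub' x z
      calc ‖x‖ = ‖z + (x - z)‖ := by ring_nf
        _ ≤ ‖z‖ + ‖x - z‖ := norm_add_le _ _
        _ ≤ ‖z‖ + 1 := by have := mem_ball_iff_norm.mp hx; linarith
    have htx : (t:ℂ) * x ∈ closedBall (0:ℂ) (‖z‖+1) := by
      simp only [mem_closedBall, dist_zero_right, norm_mul, Complex.norm_real, Real.norm_eq_abs]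
      calc |t| * ‖x‖ ≤ 1 * (‖z‖+1) := by
            apply mul_le_mul ht' hxn (norm_nonneg _) (by norm_num)
        _ = ‖z‖ + 1 := by ring
    calc ‖F' x t‖ ≤ ‖u ((t:ℂ)*x)‖ + ‖x * (deriv u ((t:ℂ)*x) * (t:ℂ))‖ := norm_add_le _ _
      _ = ‖u ((t:ℂ)*x)‖ + ‖x‖ * (‖deriv u ((t:ℂ)*x)‖ * |t|) := by
          simp [norm_mul, Complex.norm_real, Real.norm_eq_abs]
      _ ≤ ‖u ((t:ℂ)*x)‖ + (‖z‖+1) * (‖deriv u ((t:ℂ)*x)‖ * 1) := by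
          gcongr
      _ = ‖u ((t:ℂ)*x)‖ + (‖z‖+1) * ‖deriv u ((t:ℂ)*x)‖ := by ring
      _ ≤ M := hM _ htx
  · -- differentiability in x
    refine Filter.Eventually.of_forall fun t _ => fun x _ => ?_
    have h1 : HasDerivAt (fun x : ℂ => (t:ℂ) * x) (t:ℂ) x := by
      simpa using (hasDerivAt_id x).const_mul (t:ℂ)
    have h2 : HasDerivAt u (deriv u ((t:ℂ) * x)) ((t:ℂ) * x) := (hu _).hasDerivAt
    have := (hasDerivAt_id x).mul (h2.comp x h1)
    refine this.congr_deriv ?_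
    simp only [hF', Function.comp_apply, id_eq]
    ring

private lemma exists_exp_rep {f : ℂ → ℂ} (hf : Differentiable ℂ f) (hnz : ∀ z, f z ≠ 0) :
    ∃ h : ℂ → ℂ, Differentiable ℂ h ∧ ∀ z, f z = Complex.exp (h z) := by
  have hu : Differentiable ℂ (fun z => deriv f z / f z) := (deriv_diff hf).div hf hnz
  obtain ⟨h, h0, hd⟩ := exists_primitive _ hu
  have hφ : ∀ z, HasDerivAt (fun z => f z * Complex.exp (-h z)) 0 z := by
    intro z
    have h1 : HasDerivAt f (deriv f z) z := (hf z).hasDerivAt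
    have h2 : HasDerivAt (fun z => Complex.exp (-h z))
        (Complex.exp (-h z) * -(deriv f z / f z)) z := ((hd z).neg).cexp
    have := h1.mul h2
    refine this.congr_deriv ?_
    linear_combination (-(deriv f z * Complex.exp (-h z))) * (mul_inv_cancel₀ (hnz z))
  have hconst : ∀ z, f z * Complex.exp (-h z) = f 0 := by
    intro z
    have hdiff : Differentiable ℂ (fun z => f z * Complex.exp (-h z)) :=
      fun z => (hφ z).differentiableAt
    have := is_const_of_deriv_eq_zero hdiff (fun z => (hφ z).deriv) z 0
    simpa [h0] using this
  refine ⟨fun z => Complex.log (f 0) + h z, by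
      exact (differentiable_const _).add (fun z => (hd z).differentiableAt), fun z => ?_⟩
  have hc : f z = f 0 * Complex.exp (h z) := by
    rw [← hconst z, mul_assoc, ← Complex.exp_add]
    simp
  rw [Complex.exp_add, Complex.exp_log (hnz 0), ← hc]

private lemma poly_of_growth : ∀ (n : ℕ) (K : ℝ) (φ : ℂ → ℂ), Differentiable ℂ φ →
    (∀ z, ‖φ z‖ ≤ K * (1 + ‖z‖) ^ n) → ∃ p : Polynomial ℂ, ∀ z, φ z = Polynomial.eval z p := by
  intro n
  induction n with
  | zero =>
    intro K φ hφ hb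
    refine ⟨Polynomial.C (φ 0), fun z => ?_⟩
    have hbd : Bornology.IsBounded (Set.range φ) := by
      rw [isBounded_iff_forall_norm_le]
      exact ⟨K, by rintro x ⟨z, rfl⟩; simpa using hb z⟩
    simpa using hφ.apply_eq_apply_of_bounded hbd z 0
  | succ n ih =>
    intro K φ hφ hb
    have hK : 0 ≤ K := by
      have := (norm_nonneg (φ 0)).trans (hb 0)
      simpa using this
    set ψ : ℂ → ℂ := dslope φ 0 with hψ
    have hψd : Differentiable ℂ ψ := by
      rw [← differentiableOn_univ]
      exact (Complex.differentiableOn_dslope Filter.univ_mem).mpr hφ.differentiableOn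
    obtain ⟨M, hM⟩ := (isCompact_closedBall (0:ℂ) 1).exists_bound_of_continuousOn
      (hψd.continuous.continuousOn)
    have key : ∀ z, ‖ψ z‖ ≤ (4*K + max M 0) * (1 + ‖z‖) ^ n := by
      intro z
      have h1r : (1:ℝ) ≤ 1 + ‖z‖ := by linarith [norm_nonneg z]
      have hpow : (1:ℝ) ≤ (1 + ‖z‖)^n := one_le_pow₀ h1r
      rcases le_or_gt ‖z‖ 1 with hz1 | hz1
      · have := hM z (by simpa [mem_closedBall, dist_zero_right] using hz1)
        calc ‖ψ z‖ ≤ M := this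
          _ ≤ max M 0 := le_max_left _ _
          _ ≤ (4*K + max M 0) * 1 := by nlinarith [le_max_right M 0]
          _ ≤ (4*K + max M 0) * (1 + ‖z‖)^n := by
              have h0 : (0:ℝ) ≤ 4*K + max M 0 := by positivity
              nlinarith
      · have hzne : z ≠ 0 := by intro h; rw [h] at hz1; simp at hz1; linarith
        have : ψ z = (φ z - φ 0) / z := by
          rw [hψ, dslope_of_ne _ hzne, slope_def_field]
          field_simp [hzne]
          rw [sub_zero]
        rw [this]
        rw [norm_div]
        have hφ0 : ‖φ 0‖ ≤ K := by simpa using hb 0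
        have hbz := hb z
        have hnum : ‖φ z - φ 0‖ ≤ 2 * K * (1 + ‖z‖)^(n+1) := by
          calc ‖φ z - φ 0‖ ≤ ‖φ z‖ + ‖φ 0‖ := norm_sub_le _ _
            _ ≤ K * (1 + ‖z‖)^(n+1) + K := by linarith
            _ ≤ 2 * K * (1 + ‖z‖)^(n+1) := by
                have h2 : (1:ℝ) ≤ (1 + ‖z‖)^(n+1) := one_le_pow₀ h1r
                nlinarith [mul_nonneg hK (sub_nonneg.mpr h2)]
        have hz0 : (0:ℝ) < ‖z‖ := by linarith
        rw [div_le_iff₀ hz0]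
        calc ‖φ z - φ 0‖ ≤ 2 * K * (1 + ‖z‖)^(n+1) := hnum
          _ = 2 * K * (1 + ‖z‖)^n * (1 + ‖z‖) := by ring
          _ ≤ 2 * K * (1 + ‖z‖)^n * (2 * ‖z‖) := by
              have hp : (0:ℝ) ≤ (1 + ‖z‖)^n := by positivity
              nlinarith [mul_nonneg (mul_nonneg hK hp) (by linarith : (0:ℝ) ≤ ‖z‖ - 1)]
          _ = 4*K * (1 + ‖z‖)^n * ‖z‖ := by ring
          _ ≤ (4*K + max M 0) * (1 + ‖z‖)^n * ‖z‖ := by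
              have hp : (0:ℝ) ≤ (1 + ‖z‖)^n := by positivity
              nlinarith [le_max_right M 0, mul_nonneg hp hz0.le]
    obtain ⟨q, hq⟩ := ih _ ψ hψd key
    refine ⟨Polynomial.C (φ 0) + Polynomial.X * q, fun z => ?_⟩
    have := sub_smul_dslope φ 0 z
    simp only [sub_zero, smul_eq_mul] at this
    rw [Polynomial.eval_add, Polynomial.eval_C, Polynomial.eval_mul, Polynomial.eval_X, ← hq]
    linear_combination -this

private lemma borel_caratheodory {h : ℂ → ℂ} (hd : Differentiable ℂ h) (b : ℝ) (N : ℕ)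
    (hre : ∀ z, (h z).re ≤ b + (1 + ‖z‖) ^ N) :
    ∃ K : ℝ, ∀ z, ‖h z‖ ≤ K * (1 + ‖z‖) ^ N := by
  set c : ℝ := |b| + ‖h 0‖ + 1 with hc
  have hc1 : 1 ≤ c := by
    have := abs_nonneg b; have := norm_nonneg (h 0); linarith [hc.ge]
  refine ⟨‖h 0‖ + 2*c + 2*3^N, fun z => ?_⟩
  set r : ℝ := max ‖z‖ 1 with hr
  have hr1 : (1:ℝ) ≤ r := le_max_right _ _
  have hrz : ‖z‖ ≤ r := le_max_left _ _
  set R : ℝ := 2 * r with hR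
  have hRpos : 0 < R := by rw [hR]; linarith
  have hzR : z ∈ ball (0:ℂ) R := by
    simp only [mem_ball, dist_zero_right]
    calc ‖z‖ ≤ r := hrz
      _ < 2 * r := by linarith
  set A : ℝ := c + (1 + R)^N with hA
  have hApos : (0:ℝ) < A := by
    have : (0:ℝ) ≤ (1+R)^N := by positivity
    linarith [hA.ge]
  have hφlt : ∀ ζ ∈ ball (0:ℂ) R, (h ζ - h 0).re < A := by
    intro ζ hζ
    have h1 : (h ζ).re ≤ b + (1 + ‖ζ‖)^N := hre ζ
    have h2 : (1 + ‖ζ‖)^N ≤ (1 + R)^N := by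
      apply pow_le_pow_left₀ (by positivity)
      have : ‖ζ‖ < R := by simpa [dist_zero_right] using mem_ball.mp hζ
      linarith
    have h3 : -(h 0).re ≤ ‖h 0‖ := by
      calc -(h 0).re ≤ |(h 0).re| := neg_le_abs _
        _ ≤ ‖h 0‖ := Complex.abs_re_le_norm _
        _ = ‖h 0‖ := rfl
    have hb' : b ≤ |b| := le_abs_self b
    simp only [Complex.sub_re]
    calc (h ζ).re - (h 0).re ≤ |b| + ‖h 0‖ + (1+R)^N := by linarith
      _ < c + (1+R)^N := by linarith [hc.ge]
  set φ : ℂ → ℂ := fun ζ => h ζ - h 0 with hφ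
  set w : ℂ → ℂ := fun ζ => φ ζ / (2*(A:ℂ) - φ ζ) with hw
  have hden : ∀ ζ ∈ ball (0:ℂ) R, 2*(A:ℂ) - φ ζ ≠ 0 := by
    intro ζ hζ H
    have h0' : (2*(A:ℂ) - φ ζ).re = 0 := by rw [H]; simp
    simp only [hφ, Complex.sub_re, Complex.mul_re, Complex.ofReal_re,
      Complex.ofReal_im] at h0'
    have hlt := hφlt ζ hζ
    rw [Complex.sub_re] at hlt
    norm_num at h0'
    linarith
  have hwdiff : DifferentiableOn ℂ w (ball 0 R) := by
    apply DifferentiableOn.div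
    · exact ((hd.sub_const (h 0)).differentiableOn)
    · exact ((differentiable_const _).sub (hd.sub_const (h 0))).differentiableOn
    · exact hden
  have hw0 : w 0 = 0 := by simp [hw, hφ]
  have hmaps : MapsTo w (ball 0 R) (ball (w 0) 1) := by
    intro ζ hζ
    rw [hw0]
    simp only [mem_ball, dist_zero_right, hw]
    rw [norm_div]
    have hdζ := hden ζ hζ
    have hdpos : 0 < ‖2*(A:ℂ) - φ ζ‖ := norm_pos_iff.mpr hdζ
    rw [div_lt_one hdpos]
    have hlt := hφlt ζ hζ
    rw [Complex.sub_re] at hlt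
    have key : ‖φ ζ‖^2 < ‖2*(A:ℂ) - φ ζ‖^2 := by
      rw [Complex.sq_norm, Complex.sq_norm]
      simp only [hφ, Complex.normSq_apply, Complex.sub_re, Complex.sub_im, Complex.mul_re,
        Complex.mul_im, Complex.ofReal_re, Complex.ofReal_im]
      norm_num
      nlinarith [mul_pos hApos (sub_pos.mpr hlt)]
    nlinarith [norm_nonneg (φ ζ), hdpos]
  have sch := Complex.dist_le_div_mul_dist_of_mapsTo_ball hwdiff (hmaps.mono_right ball_subset_closedBall) hzR
  rw [hw0, dist_zero_right, dist_zero_right] at sch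
  have hwz : ‖w z‖ ≤ 1/2 := by
    have hrpos : (0:ℝ) < r := by linarith
    calc ‖w z‖ ≤ 1 / R * ‖z‖ := sch
      _ ≤ 1 / R * r := by gcongr
      _ = 1/2 := by rw [hR]; field_simp
  have hid : φ z * (1 + w z) = 2*(A:ℂ) * w z := by
    have hdz := hden z hzR
    rw [hw]
    field_simp
    ring
  have h1w : (1:ℝ)/2 ≤ ‖1 + w z‖ := by
    have h1 : (1:ℝ) = ‖(1 + w z) - w z‖ := by norm_num
    have h2 := norm_sub_le (1 + w z) (w z)
    rw [← h1] at h2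
    linarith
  have hφz : ‖φ z‖ ≤ 2*A := by
    have hmul : ‖φ z‖ * ‖1 + w z‖ = 2*A*‖w z‖ := by
      rw [← norm_mul, hid, norm_mul]
      congr 1
      rw [show (2*(A:ℂ)) = ((2*A : ℝ) : ℂ) by push_cast; ring]
      rw [Complex.norm_real, Real.norm_eq_abs, abs_of_pos (by linarith)]
    nlinarith [norm_nonneg (φ z), norm_nonneg (w z)]
  have hhz : ‖h z‖ ≤ ‖h 0‖ + 2*A := by
    calc ‖h z‖ = ‖h 0 + φ z‖ := by rw [hφ]; ring_nf
      _ ≤ ‖h 0‖ + ‖φ z‖ := norm_add_le _ _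
      _ ≤ ‖h 0‖ + 2*A := by linarith
  have hbase : 1 + R ≤ 3 * (1 + ‖z‖) := by
    rw [hR]
    have : r ≤ 1 + ‖z‖ := max_le (by linarith [norm_nonneg z]) (by linarith [norm_nonneg z])
    linarith
  have hpow3 : (1+R)^N ≤ 3^N * (1+‖z‖)^N := by
    calc (1+R)^N ≤ (3*(1+‖z‖))^N := pow_le_pow_left₀ (by positivity) hbase N
      _ = 3^N * (1+‖z‖)^N := mul_pow _ _ _
  have hone : (1:ℝ) ≤ (1+‖z‖)^N := one_le_pow₀ (by linarith [norm_nonneg z])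
  calc ‖h z‖ ≤ ‖h 0‖ + 2*A := hhz
    _ = ‖h 0‖ + 2*c + 2*(1+R)^N := by rw [hA]; ring
    _ ≤ ‖h 0‖ + 2*c + 2*(3^N*(1+‖z‖)^N) := by linarith
    _ ≤ (‖h 0‖ + 2*c + 2*3^N) * (1+‖z‖)^N := by
        nlinarith [norm_nonneg (h 0), mul_nonneg (by linarith [norm_nonneg (h 0)] : (0:ℝ) ≤ ‖h 0‖ + 2*c) (sub_nonneg.mpr hone), pow_pos (by norm_num : (0:ℝ) < 3) N]

/-- **Green's Borel lemma, part b.** If `g₀`, `g₁` are entire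
functions of finite order, `g₁` nowhere vanishing, and `g₀² + g₁² = 1`, then both
`g₀` and `g₁` are constant. -/
theorem stmt11 (g₀ g₁ : ℂ → ℂ)
    (h₀ : Differentiable ℂ g₀) (h₁ : Differentiable ℂ g₁)
    (hfin₀ : ∃ lam C : ℝ, ∀ z, ‖g₀ z‖ ≤ C * Real.exp ((1 + ‖z‖) ^ lam))
    (hfin₁ : ∃ lam C : ℝ, ∀ z, ‖g₁ z‖ ≤ C * Real.exp ((1 + ‖z‖) ^ lam))
    (hnv : ∀ z, g₁ z ≠ 0)
    (heq : ∀ z, g₀ z ^ 2 + g₁ z ^ 2 = 1) :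
    (∀ z w, g₀ z = g₀ w) ∧ (∀ z w, g₁ z = g₁ w) := by
  obtain ⟨lam₀, C₀, hb₀⟩ := hfin₀
  obtain ⟨lam₁, C₁, hb₁⟩ := hfin₁
  set f : ℂ → ℂ := fun z => g₀ z + Complex.I * g₁ z with hfdef
  set g : ℂ → ℂ := fun z => g₀ z - Complex.I * g₁ z with hgdef
  have hfg : ∀ z, f z * g z = 1 := by
    intro z
    simp only [hfdef, hgdef]
    linear_combination heq z - (g₁ z)^2 * Complex.I_sq
  have hfnz : ∀ z, f z ≠ 0 := fun z h => by simpa [h] using hfg z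
  have hfd : Differentiable ℂ f := h₀.add ((differentiable_const _).mul h₁)
  -- growth bound with natural exponent
  set N : ℕ := ⌈max lam₀ lam₁⌉₊ with hN
  have hC₀ : 0 ≤ C₀ := by
    have h1 := (norm_nonneg (g₀ 0)).trans (hb₀ 0)
    nlinarith [Real.exp_pos ((1 + ‖(0:ℂ)‖) ^ lam₀)]
  have hC₁ : 0 ≤ C₁ := by
    have h1 := (norm_nonneg (g₁ 0)).trans (hb₁ 0)
    nlinarith [Real.exp_pos ((1 + ‖(0:ℂ)‖) ^ lam₁)]
  set C' : ℝ := C₀ + C₁ + 1 with hC'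
  have hC'pos : 0 < C' := by linarith
  have hmono : ∀ (lam : ℝ), lam ≤ max lam₀ lam₁ → ∀ z : ℂ,
      (1 + ‖z‖) ^ lam ≤ (1 + ‖z‖)^N := by
    intro lam hlam z
    have h1 : (1:ℝ) ≤ 1 + ‖z‖ := by
      have := norm_nonneg z; linarith
    have h2 : lam ≤ (N:ℝ) := by
      calc lam ≤ max lam₀ lam₁ := hlam
        _ ≤ (⌈max lam₀ lam₁⌉₊ : ℝ) := Nat.le_ceil _
    calc (1 + ‖z‖) ^ lam ≤ (1 + ‖z‖) ^ (N:ℝ) :=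
          Real.rpow_le_rpow_of_exponent_le h1 h2
      _ = (1 + ‖z‖)^N := by rw [Real.rpow_natCast]
  have hfb : ∀ z, ‖f z‖ ≤ C' * Real.exp ((1+‖z‖)^N) := by
    intro z
    have e0 : ‖g₀ z‖ ≤ C₀ * Real.exp ((1+‖z‖)^N) := by
      calc ‖g₀ z‖ ≤ C₀ * Real.exp ((1 + ‖z‖) ^ lam₀) := hb₀ z
        _ ≤ C₀ * Real.exp ((1+‖z‖)^N) := by
            gcongr
            exact hmono lam₀ (le_max_left _ _) z
    have e1 : ‖g₁ z‖ ≤ C₁ * Real.exp ((1+‖z‖)^N) := by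
      calc ‖g₁ z‖ ≤ C₁ * Real.exp ((1 + ‖z‖) ^ lam₁) := hb₁ z
        _ ≤ C₁ * Real.exp ((1+‖z‖)^N) := by
            gcongr
            exact hmono lam₁ (le_max_right _ _) z
    have hexp : (0:ℝ) < Real.exp ((1+‖z‖)^N) := Real.exp_pos _
    calc ‖f z‖ ≤ ‖g₀ z‖ + ‖Complex.I * g₁ z‖ := norm_add_le _ _
      _ = ‖g₀ z‖ + ‖g₁ z‖ := by rw [norm_mul, Complex.norm_I, one_mul]
      _ ≤ C₀ * Real.exp ((1+‖z‖)^N) + C₁ * Real.exp ((1+‖z‖)^N) := by linarith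
      _ ≤ C' * Real.exp ((1+‖z‖)^N) := by rw [hC']; nlinarith
  obtain ⟨h, hh, hrep⟩ := exists_exp_rep hfd hfnz
  have hre : ∀ z, (h z).re ≤ Real.log C' + (1+‖z‖)^N := by
    intro z
    have h1 : Real.exp ((h z).re) = ‖f z‖ := by
      rw [hrep z, Complex.norm_exp]
    have h2 : Real.exp ((h z).re) ≤ C' * Real.exp ((1+‖z‖)^N) := by
      rw [h1]; exact hfb z
    have h3 := (Real.exp_le_exp (x := (h z).re)
      (y := Real.log C' + (1+‖z‖)^N)).mp
    apply h3
    rw [Real.exp_add, Real.exp_log hC'pos]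
    exact h2
  obtain ⟨K, hK⟩ := borel_caratheodory hh (Real.log C') N hre
  obtain ⟨p, hp⟩ := poly_of_growth N K h hh hK
  have hzero : ∀ z, h z ≠ 0 := by
    intro z hz
    have hf1 : f z = 1 := by rw [hrep z, hz, Complex.exp_zero]
    have hg1 : g z = 1 := by
      have := hfg z
      rw [hf1, one_mul] at this
      exact this
    apply hnv z
    have hdiff : f z - g z = 2 * Complex.I * g₁ z := by
      simp only [hfdef, hgdef]; ring
    rw [hf1, hg1, sub_self] at hdiff
    simpa [Complex.I_ne_zero] using hdiff.symm
  have hdeg : p.degree ≤ 0 := by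
    by_contra hdegc
    obtain ⟨z, hz⟩ := Complex.exists_root (lt_of_not_ge hdegc)
    exact hzero z (by rw [hp z]; exact hz)
  have ha := Polynomial.eq_C_of_degree_le_zero hdeg
  have hconst : ∀ z w, h z = h w := fun z w => by
    rw [hp z, hp w, ha, Polynomial.eval_C, Polynomial.eval_C]
  have hfc : ∀ z w, f z = f w := fun z w => by rw [hrep z, hrep w, hconst z w]
  have hgc : ∀ z w, g z = g w := by
    intro z w
    have hz' : g z = (f z)⁻¹ := by
      field_simp [hfnz z]
      linear_combination hfg z
    have hw' : g w = (f w)⁻¹ := by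
      field_simp [hfnz w]
      linear_combination hfg w
    rw [hz', hw', hfc z w]
  have hg₀ : ∀ v, g₀ v = (f v + g v) / 2 := fun v => by
    simp only [hfdef, hgdef]; ring
  have hg₁ : ∀ v, g₁ v = (f v - g v) / (2 * Complex.I) := fun v => by
    simp only [hfdef, hgdef]
    rw [eq_div_iff (by simp [Complex.I_ne_zero] : (2:ℂ) * Complex.I ≠ 0)]
    ring
  constructor
  · intro z w; rw [hg₀ z, hg₀ w, hfc z w, hgc z w]
  · intro z w; rw [hg₁ z, hg₁ w, hfc z w, hgc z w]
end

section
/- Let Q₁, Q₂, Q₃ ∈ ℂ[z₀,z₁,z₂] be homogeneous quadratic polynomials without common zeros in ℙ₂, and let f : ℂ → ℙ₂ be holomorphic with each Q_j∘f nowhere vanishing (for some/any lift of f). Suppose f(ℂ) ⊆ V(Q₁^{k₁}Q₂^{k₂}Q₃^{k₃} − α Q₁^{l₁}Q₂^{l₂}Q₃^{l₃}) with α ≠ 0, Σk_j = Σl_j = 4, and k_j = l_j for at least one j. Then f(ℂ) is contained in a curve {σQ_i − τQ_j = 0} for some i ≠ j and (σ,τ) ≠ (0,0), i.e. in a member of the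 pencil spanned by two of the quadrics. -/
open MvPolynomial

private lemma key_const (p q : ℂ → ℂ) (hpc : Continuous p) (hqc : Continuous q)
    (hp : ∀ z, p z ≠ 0) (hq : ∀ z, q z ≠ 0) (r : ℕ) (hr : r ≠ 0) (β : ℂ)
    (h : ∀ z, p z ^ r = β * q z ^ r) :
    ∃ γ : ℂ, γ ≠ 0 ∧ ∀ z, p z = γ * q z := by
  set g : ℂ → ℂ := fun z => p z / q z with hg
  have hgc : Continuous g := hpc.div hqc hq
  have hgr : ∀ z, g z ∈ {x : ℂ | x ^ r = β} := by
    intro z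
    simp only [hg, Set.mem_setOf_eq, div_pow, h z, mul_div_assoc,
      div_self (pow_ne_zero r (hq z)), mul_one]
  have hP : (Polynomial.X ^ r - Polynomial.C β : Polynomial ℂ) ≠ 0 :=
    (Polynomial.monic_X_pow_sub_C β hr).ne_zero
  have hfin : {x : ℂ | x ^ r = β}.Finite := by
    refine (Polynomial.finite_setOf_isRoot hP).subset ?_
    intro x hx
    simp only [Set.mem_setOf_eq] at hx ⊢
    simp [Polynomial.IsRoot, sub_eq_zero, hx]
  haveI : Finite ({x : ℂ | x ^ r = β} : Set ℂ) := hfin.to_subtype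
  set G : ℂ → ({x : ℂ | x ^ r = β} : Set ℂ) := fun z => ⟨g z, hgr z⟩ with hG
  have hGc : Continuous G := hgc.subtype_mk _
  have hconst : ∀ z, G z = G 0 := fun z => PreconnectedSpace.constant inferInstance hGc
  refine ⟨g 0, div_ne_zero (hp 0) (hq 0), fun z => ?_⟩
  have : g z = g 0 := congrArg Subtype.val (hconst z)
  rw [← this]
  show p z = p z / q z * q z
  rw [div_mul_cancel₀ _ (hq z)]

private lemma main2 (u p q : ℂ → ℂ) (hpc : Continuous p) (hqc : Continuous q)
    (hu : ∀ z, u z ≠ 0) (hp : ∀ z, p z ≠ 0) (hq : ∀ z, q z ≠ 0)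
    (α : ℂ) (hα : α ≠ 0) (a b c d : ℕ) (hsum : a + b = c + d) (hne : a ≠ c)
    (h : ∀ z, u z * (p z ^ a * q z ^ b) = α * (u z * (p z ^ c * q z ^ d))) :
    ∃ σ τ : ℂ, (σ, τ) ≠ (0, 0) ∧ ∀ z, σ * p z - τ * q z = 0 := by
  have h' : ∀ z, p z ^ a * q z ^ b = α * (p z ^ c * q z ^ d) := by
    intro z
    have := h z
    have h2 : u z * (p z ^ a * q z ^ b) = u z * (α * (p z ^ c * q z ^ d)) := by
      linear_combination this
    exact mul_left_cancel₀ (hu z) h2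
  rcases lt_or_gt_of_ne hne with hlt | hgt
  · -- a < c, so b > d ; q^r = α * p^r with r = c - a
    set r : ℕ := c - a with hrdef
    have hc : c = a + r := by omega
    have hb : b = d + r := by omega
    have hr : r ≠ 0 := by omega
    have hqr : ∀ z, q z ^ r = α * p z ^ r := by
      intro z
      have e1 := h' z
      rw [hc, hb] at e1
      have e2 : p z ^ a * q z ^ d * q z ^ r = p z ^ a * q z ^ d * (α * p z ^ r) := by
        rw [pow_add, pow_add] at e1
        linear_combination e1
      exact mul_left_cancel₀
        (mul_ne_zero (pow_ne_zero _ (hp z)) (pow_ne_zero _ (hq z))) e2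
    obtain ⟨γ, hγ, hγeq⟩ := key_const q p hqc hpc hq hp r hr α hqr
    exact ⟨γ, 1, by simp, fun z => by rw [hγeq z]; ring⟩
  · -- a > c, so d > b ; p^r = α * q^r with r = a - c
    set r : ℕ := a - c with hrdef
    have ha : a = c + r := by omega
    have hd : d = b + r := by omega
    have hr : r ≠ 0 := by omega
    have hpr : ∀ z, p z ^ r = α * q z ^ r := by
      intro z
      have e1 := h' z
      rw [ha, hd] at e1
      have e2 : p z ^ c * q z ^ b * p z ^ r = p z ^ c * q z ^ b * (α * q z ^ r) := by
        rw [pow_add, pow_add] at e1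
        linear_combination e1
      exact mul_left_cancel₀
        (mul_ne_zero (pow_ne_zero _ (hp z)) (pow_ne_zero _ (hq z))) e2
    obtain ⟨γ, hγ, hγeq⟩ := key_const p q hpc hqc hp hq r hr α hpr
    exact ⟨1, γ, by simp, fun z => by rw [hγeq z]; ring⟩

/-- Let `Q₁, Q₂, Q₃` be quadratic forms without common zeros in `ℙ₂`
and `f : ℂ → ℙ₂` holomorphic with each `Q_j∘f` nowhere vanishing. If
`f(ℂ) ⊆ V(Q₁^{k₁}Q₂^{k₂}Q₃^{k₃} − α Q₁^{l₁}Q₂^{l₂}Q₃^{l₃})` where `α ≠ 0`,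
`Σk_j = Σl_j = 4`, the two (distinct) exponent vectors agree in at least one entry,
then `f(ℂ)` lies in a member `{σQ_i − τQ_j = 0}` of a pencil spanned by two of the
quadrics. -/
theorem stmt13 (Q : Fin 3 → MvPolynomial (Fin 3) ℂ)
    (hhom : ∀ j, (Q j).IsHomogeneous 2)
    (hnc : ∀ z : Fin 3 → ℂ, z ≠ 0 → ∃ j, eval z (Q j) ≠ 0)
    (F : ℂ → Fin 3 → ℂ)
    (hF : ∀ i, Differentiable ℂ fun z => F z i)
    (hFnz : ∀ z j, eval (F z) (Q j) ≠ 0)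
    (α : ℂ) (hα : α ≠ 0) (k l : Fin 3 → ℕ)
    (hk : k 0 + k 1 + k 2 = 4) (hl : l 0 + l 1 + l 2 = 4)
    (hkl : k ≠ l) (hagree : ∃ j, k j = l j)
    (hrel : ∀ z, ∏ j, eval (F z) (Q j) ^ k j = α * ∏ j, eval (F z) (Q j) ^ l j) :
    ∃ i j : Fin 3, i ≠ j ∧ ∃ σ τ : ℂ, (σ, τ) ≠ (0, 0) ∧
      ∀ z, σ * eval (F z) (Q i) - τ * eval (F z) (Q j) = 0 := by
  have hFc : Continuous F := continuous_pi fun i => (hF i).continuous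
  have hEc : ∀ m : Fin 3, Continuous fun z => eval (F z) (Q m) :=
    fun m => (MvPolynomial.continuous_eval (Q m)).comp hFc
  simp only [Fin.prod_univ_three] at hrel
  obtain ⟨j, hj⟩ := hagree
  fin_cases j
  · -- j = 0 : use indices 1, 2
    have hj0 : k 0 = l 0 := hj
    rw [← hj0] at hrel
    have hsum : k 1 + k 2 = l 1 + l 2 := by omega
    have hne : k 1 ≠ l 1 := by
      intro h1
      have h2 : k 2 = l 2 := by omega
      exact hkl (funext fun m => by fin_cases m <;> first | exact hj0 | assumption)
    refine ⟨1, 2, by decide, ?_⟩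
    exact main2 (fun z => eval (F z) (Q 0) ^ k 0) _ _ (hEc 1) (hEc 2)
      (fun z => pow_ne_zero _ (hFnz z 0)) (fun z => hFnz z 1) (fun z => hFnz z 2)
      α hα _ _ _ _ hsum hne (fun z => by linear_combination hrel z)
  · -- j = 1 : use indices 0, 2
    have hj1 : k 1 = l 1 := hj
    rw [← hj1] at hrel
    have hsum : k 0 + k 2 = l 0 + l 2 := by omega
    have hne : k 0 ≠ l 0 := by
      intro h1
      have h2 : k 2 = l 2 := by omega
      exact hkl (funext fun m => by fin_cases m <;> first | exact hj1 | assumption)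
    refine ⟨0, 2, by decide, ?_⟩
    exact main2 (fun z => eval (F z) (Q 1) ^ k 1) _ _ (hEc 0) (hEc 2)
      (fun z => pow_ne_zero _ (hFnz z 1)) (fun z => hFnz z 0) (fun z => hFnz z 2)
      α hα _ _ _ _ hsum hne (fun z => by linear_combination hrel z)
  · -- j = 2 : use indices 0, 1
    have hj2 : k 2 = l 2 := hj
    rw [← hj2] at hrel
    have hsum : k 0 + k 1 = l 0 + l 1 := by omega
    have hne : k 0 ≠ l 0 := by
      intro h1
      have h2 : k 1 = l 1 := by omega
      exact hkl (funext fun m => by fin_cases m <;> first | exact hj2 | assumption)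
    refine ⟨0, 1, by decide, ?_⟩
    exact main2 (fun z => eval (F z) (Q 2) ^ k 2) _ _ (hEc 0) (hEc 1)
      (fun z => pow_ne_zero _ (hFnz z 2)) (fun z => hFnz z 0) (fun z => hFnz z 1)
      α hα _ _ _ _ hsum hne (fun z => by linear_combination hrel z)
end
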